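/- For the group G = Q8 × (Z/2)^d and every symmetric subset S of G not containing the identity, the Cayley graph Cay(G,S) has all eigenvalues integral. -/

import Mathlib

open Classical in
/-- Adjacency matrix of the Cayley graph `Cay(G,S)`: `x ~ y` iff `x * y⁻¹ ∈ S`. -/
noncomputable def cayleyMatrix {G : Type*} [Group G] (S : Set G) : Matrix G G ℝ :=
  fun x y => if x * y⁻¹ ∈ S then 1 else 0

/-- All eigenvalues of the real matrix `A` are integers. -/
noncomputable def isIntegralMatrix {n : Type*} [Finite n] (A : Matrix n n ℝ) : Prop :=
  letI := Fintype.ofFinite n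
  letI := Classical.decEq n
  ∀ μ : ℝ, Module.End.HasEigenvalue (Matrix.toLin' A) μ → ∃ z : ℤ, μ = (z : ℝ)

section Core
variable {M : Type*} [Ring M] [Algebra ℝ M]

/-- Product of `X - k•E` over a list of integers. -/
noncomputable def gpl (X E : M) (L : List ℤ) : M := (L.map fun k => X - k • E).prod

def IccL (a b : ℕ) : List ℤ := (List.range (a+b+1)).map (fun (j : ℕ) => (j:ℤ) - (a:ℤ))

lemma mem_IccL {a b : ℕ} {k : ℤ} : k ∈ IccL a b ↔ -(a:ℤ) ≤ k ∧ k ≤ b := by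
  unfold IccL
  simp only [List.mem_map, List.mem_range]
  constructor
  · rintro ⟨j, hj, rfl⟩
    omega
  · rintro ⟨h1, h2⟩
    exact ⟨(k + a).toNat, by omega, by omega⟩

lemma IccL_shift_down {a b : ℕ} (hb : 1 ≤ b) :
    (IccL a b).map (· - 1) = IccL (a+1) (b-1) := by
  unfold IccL
  rw [List.map_map, show (a+1)+(b-1)+1 = a+b+1 by omega]
  congr 1
  funext j
  simp only [Function.comp_apply]
  push_cast
  ring

lemma IccL_shift_up {a b : ℕ} (ha : 1 ≤ a) :
    (IccL a b).map (· + 1) = IccL (a-1) (b+1) := by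
  unfold IccL
  rw [List.map_map, show (a-1)+(b+1)+1 = a+b+1 by omega]
  congr 1
  funext j
  simp only [Function.comp_apply]
  push_cast [ha]
  ring

omit [Algebra ℝ M] in
lemma pull (f g : ℤ → M) (W : M) (L : List ℤ)
    (hfg : ∀ k ∈ L, f k * W = g k * W) (hg : ∀ k ∈ L, Commute W (g k)) :
    (L.map f).prod * W = (L.map g).prod * W := by
  induction L with
  | nil => simp
  | cons k L ih =>
    have hW : Commute W (L.map g).prod :=
      Commute.list_prod_right _ _ (by
        intro x hx
        simp only [List.mem_map] at hx
        obtain ⟨j, hj, rfl⟩ := hx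
        exact hg j (List.mem_cons_of_mem _ hj))
    simp only [List.map_cons, List.prod_cons]
    rw [mul_assoc, ih (fun j hj => hfg j (List.mem_cons_of_mem _ hj))
        (fun j hj => hg j (List.mem_cons_of_mem _ hj)), ← mul_assoc, mul_assoc,
        ← hW.eq, ← mul_assoc, hfg k (List.mem_cons_self), mul_assoc, hW.eq, ← mul_assoc]

omit [Algebra ℝ M] in
lemma sum_mul_of (l : List M) (E : M) (h : ∀ P ∈ l, P * E = P) : l.sum * E = l.sum := by
  induction l with
  | nil => simp
  | cons P l ih => simp only [List.sum_cons, add_mul, h P (List.mem_cons_self),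
      ih (fun Q hQ => h Q (List.mem_cons_of_mem _ hQ))]

omit [Algebra ℝ M] in
lemma mul_sum_of (l : List M) (E : M) (h : ∀ P ∈ l, E * P = P) : E * l.sum = l.sum := by
  induction l with
  | nil => simp
  | cons P l ih => simp only [List.sum_cons, mul_add, h P (List.mem_cons_self),
      ih (fun Q hQ => h Q (List.mem_cons_of_mem _ hQ))]

lemma core (E : M) (hE : E * E = E) : ∀ (l : List M),
    (∀ P ∈ l, P * E = P) → (∀ P ∈ l, E * P = P) → (∀ P ∈ l, P * P = E) →
    (∀ P ∈ l, ∀ Q ∈ l, P * Q = Q * P) →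
    ∀ a b : ℕ, l.length ≤ a → l.length ≤ b → gpl l.sum E (IccL a b) * E = 0 := by
  intro l
  induction l with
  | nil =>
    intro _ _ _ _ a b _ _
    have h0 : (0 : M) ∈ (IccL a b).map fun k => (0:M) - k • E :=
      List.mem_map.2 ⟨0, mem_IccL.2 ⟨by omega, by omega⟩, by simp⟩
    simp only [gpl, List.sum_nil]
    rw [List.prod_eq_zero h0, zero_mul]
  | cons P l ih =>
    intro h1 h2 h3 hc a b ha hb
    have hl1 : ∀ Q ∈ l, Q * E = Q := fun Q hQ => h1 Q (List.mem_cons_of_mem _ hQ)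
    have hl2 : ∀ Q ∈ l, E * Q = Q := fun Q hQ => h2 Q (List.mem_cons_of_mem _ hQ)
    have hl3 : ∀ Q ∈ l, Q * Q = E := fun Q hQ => h3 Q (List.mem_cons_of_mem _ hQ)
    have hlc : ∀ Q ∈ l, ∀ Q' ∈ l, Q * Q' = Q' * Q := fun Q hQ Q' hQ' =>
      hc Q (List.mem_cons_of_mem _ hQ) Q' (List.mem_cons_of_mem _ hQ')
    have hPE : P * E = P := h1 P (List.mem_cons_self)
    have hEP : E * P = P := h2 P (List.mem_cons_self)
    have hPP : P * P = E := h3 P (List.mem_cons_self)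
    set X' := l.sum with hX'
    have hPX' : P * X' = X' * P :=
      (Commute.list_sum_right _ _ (fun Q hQ =>
        (hc P (List.mem_cons_self) Q (List.mem_cons_of_mem _ hQ)))).eq
    have hX'E : X' * E = X' := sum_mul_of l E hl1
    have hEX' : E * X' = X' := mul_sum_of l E hl2
    set Ep : M := (2⁻¹ : ℝ) • (E + P) with hEp
    set Em : M := (2⁻¹ : ℝ) • (E - P) with hEm
    have hsplit : Ep + Em = E := by
      rw [hEp, hEm, ← smul_add]
      have h2' : E + P + (E - P) = (2:ℝ) • E := by rw [two_smul]; abel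
      rw [h2', smul_smul]; norm_num
    have hPEp : P * Ep = Ep := by
      rw [hEp, mul_smul_comm, mul_add, hPE, hPP, add_comm]
    have hEEp : E * Ep = Ep := by
      rw [hEp, mul_smul_comm, mul_add, hE, hEP]
    have hEpE : Ep * E = Ep := by
      rw [hEp, smul_mul_assoc, add_mul, hE, hPE]
    have hPEm : P * Em = -Em := by
      rw [hEm, mul_smul_comm, mul_sub, hPE, hPP, ← smul_neg, neg_sub]
    have hEEm : E * Em = Em := by
      rw [hEm, mul_smul_comm, mul_sub, hE, hEP]
    have hEmE : Em * E = Em := by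
      rw [hEm, smul_mul_assoc, sub_mul, hE, hPE]
    have cEX' : Commute E X' := hEX'.trans hX'E.symm
    have cPX' : Commute P X' := hPX'
    have hX'Ep : Commute Ep X' := by
      rw [hEp]
      exact (cEX'.add_left cPX').smul_left _
    have hX'Em : Commute Em X' := by
      rw [hEm]
      exact (cEX'.sub_left cPX').smul_left _
    have hEEp2 : Commute Ep E := (hEpE.trans hEEp.symm : Commute Ep E)
    have hEEm2 : Commute Em E := (hEmE.trans hEEm.symm : Commute Em E)
    have stepp : ∀ k : ℤ, ((P + X') - k • E) * Ep = (X' - (k-1) • E) * Ep := by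
      intro k
      have e1 : (P + X' - k • E) * Ep = P * Ep + X' * Ep - k • (E * Ep) := by
        rw [sub_mul, add_mul, smul_mul_assoc]
      rw [e1, hPEp, hEEp, sub_mul, smul_mul_assoc, hEEp, sub_smul, one_smul]
      abel
    have stepm : ∀ k : ℤ, ((P + X') - k • E) * Em = (X' - (k+1) • E) * Em := by
      intro k
      have e1 : (P + X' - k • E) * Em = P * Em + X' * Em - k • (E * Em) := by
        rw [sub_mul, add_mul, smul_mul_assoc]
      rw [e1, hPEm, hEEm, sub_mul, smul_mul_assoc, hEEm, add_smul, one_smul]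
      abel
    have hcomp : ∀ k : ℤ, Commute Ep (X' - k • E) := by
      intro k
      refine hX'Ep.sub_right ?_
      rw [zsmul_eq_mul]
      exact (Int.cast_commute k Ep).symm.mul_right hEEp2
    have hcomm : ∀ k : ℤ, Commute Em (X' - k • E) := by
      intro k
      refine hX'Em.sub_right ?_
      rw [zsmul_eq_mul]
      exact (Int.cast_commute k Em).symm.mul_right hEEm2
    have hb1 : 1 ≤ b := by
      have := ha; have := hb; simp only [List.length_cons] at *; omega
    have ha1 : 1 ≤ a := by
      simp only [List.length_cons] at ha; omega
    have plus0 : gpl (P + X') E (IccL a b) * Ep = 0 := by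
      have hp : gpl (P + X') E (IccL a b) * Ep
          = ((IccL a b).map fun k => X' - (k-1) • E).prod * Ep :=
        pull _ _ Ep (IccL a b) (fun k _ => stepp k) (fun k _ => hcomp (k-1))
      have hre : ((IccL a b).map fun k => X' - (k-1) • E).prod
          = gpl X' E (IccL (a+1) (b-1)) := by
        rw [gpl, ← IccL_shift_down hb1, List.map_map]
        rfl
      rw [hp, hre, show Ep = E * Ep from hEEp.symm, ← mul_assoc,
        ih hl1 hl2 hl3 hlc (a+1) (b-1) (by simp only [List.length_cons] at ha ⊢; omega)
          (by simp only [List.length_cons] at hb ⊢; omega), zero_mul]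
    have minus0 : gpl (P + X') E (IccL a b) * Em = 0 := by
      have hp : gpl (P + X') E (IccL a b) * Em
          = ((IccL a b).map fun k => X' - (k+1) • E).prod * Em :=
        pull _ _ Em (IccL a b) (fun k _ => stepm k) (fun k _ => hcomm (k+1))
      have hre : ((IccL a b).map fun k => X' - (k+1) • E).prod
          = gpl X' E (IccL (a-1) (b+1)) := by
        rw [gpl, ← IccL_shift_up ha1, List.map_map]
        rfl
      rw [hp, hre, show Em = E * Em from hEEm.symm, ← mul_assoc,
        ih hl1 hl2 hl3 hlc (a-1) (b+1) (by simp only [List.length_cons] at ha ⊢; omega)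
          (by simp only [List.length_cons] at hb ⊢; omega), zero_mul]
    rw [List.sum_cons]
    calc gpl (P + X') E (IccL a b) * E = gpl (P + X') E (IccL a b) * (Ep + Em) := by
          rw [hsplit]
      _ = 0 := by rw [mul_add, plus0, minus0, add_zero]
end Core

section Grp
variable {G : Type*} [Group G] [Fintype G] [DecidableEq G]

noncomputable def RM (g : G) : Matrix G G ℝ :=
  Matrix.of fun x y => if x * y⁻¹ = g then 1 else 0

lemma RM_mul (g h : G) : RM g * RM h = RM (g * h) := by
  ext x y
  simp only [RM, Matrix.mul_apply, Matrix.of_apply]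
  rw [Finset.sum_eq_single (g⁻¹ * x)]
  · have h1 : x * (g⁻¹ * x)⁻¹ = g := by group
    rw [if_pos h1, one_mul]
    by_cases hc : g⁻¹ * x * y⁻¹ = h
    · rw [if_pos hc, if_pos (by rw [← hc]; group)]
    · rw [if_neg hc, if_neg (by
        intro hxy
        apply hc
        rw [mul_assoc, hxy]
        group)]
  · intro b _ hb
    rw [if_neg (by
      intro hcond
      apply hb
      rw [← hcond]
      group), zero_mul]
  · intro hmem
    exact absurd (Finset.mem_univ _) hmem

omit [Fintype G] in
lemma RM_one : RM (1 : G) = 1 := by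
  ext x y
  simp [RM, Matrix.one_apply, mul_inv_eq_one]

lemma cayley_eq_sum (S : Set G) [DecidablePred (· ∈ S)] :
    cayleyMatrix S = ∑ s ∈ Finset.univ.filter (· ∈ S), RM s := by
  ext x y
  rw [Matrix.sum_apply]
  by_cases h : x * y⁻¹ ∈ S
  · rw [Finset.sum_eq_single (x * y⁻¹)]
    · simp [cayleyMatrix, RM, h]
    · intro b _ hb
      simp only [RM, Matrix.of_apply, ite_eq_right_iff]
      intro he
      exact absurd he.symm hb
    · intro hmem
      simp [Finset.mem_filter, h] at hmem
  · have hz : ∀ b ∈ Finset.univ.filter (· ∈ S), RM b x y = 0 := by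
      intro b hb
      rw [Finset.mem_filter] at hb
      simp only [RM, Matrix.of_apply, ite_eq_right_iff]
      intro he
      exact absurd (he ▸ hb.2) h
    rw [Finset.sum_congr rfl hz, Finset.sum_const, smul_zero]
    simp [cayleyMatrix, h]

lemma cayley_annihilated (z : G) (hz2 : z * z = 1) (hzc : ∀ g, z * g = g * z)
    (hsq : ∀ g : G, g * g = 1 ∨ g * g = z)
    (hcm : ∀ g h : G, h * g = g * h ∨ h * g = g * h * z)
    (hc2 : ∀ g : G, g * g = 1 → ∀ h, g * h = h * g)
    (S : Set G) (hS : ∀ s ∈ S, s⁻¹ ∈ S) :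
    gpl (cayleyMatrix S) 1 (IccL (Fintype.card G) (Fintype.card G)) = 0 := by
  classical
  set N := Fintype.card G with hN
  set A := cayleyMatrix S with hA
  set Rz := RM (G := G) z with hRz
  have RMz2 : Rz * Rz = 1 := by rw [hRz, RM_mul, hz2, RM_one]
  have RzRM : ∀ g : G, Rz * RM g = RM g * Rz := fun g => by rw [hRz, RM_mul, RM_mul, hzc]
  set E : Matrix G G ℝ := (2⁻¹ : ℝ) • (1 + Rz) with hE
  set E' : Matrix G G ℝ := (2⁻¹ : ℝ) • (1 - Rz) with hE'
  have hEE' : E + E' = 1 := by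
    rw [hE, hE', ← smul_add,
      show ((1:Matrix G G ℝ) + Rz) + (1 - Rz) = (2:ℝ) • (1 : Matrix G G ℝ) by
        rw [two_smul]; abel,
      smul_smul]
    norm_num
  have aux1 : ((1:Matrix G G ℝ) + Rz) * (1 + Rz) = (2:ℝ) • (1 + Rz) := by
    rw [mul_add, mul_one, add_mul, one_mul, RMz2, two_smul]
    abel
  have aux2 : ((1:Matrix G G ℝ) - Rz) * (1 - Rz) = (2:ℝ) • (1 - Rz) := by
    rw [sub_mul, one_mul, mul_sub, mul_one, RMz2, two_smul]
    abel
  have hEE : E * E = E := by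
    rw [hE, smul_mul_assoc, mul_smul_comm, aux1, smul_smul, smul_smul]
    norm_num
  have hE'E' : E' * E' = E' := by
    rw [hE', smul_mul_assoc, mul_smul_comm, aux2, smul_smul, smul_smul]
    norm_num
  have hRzE : Rz * E = E := by
    rw [hE, mul_smul_comm, mul_add, mul_one, RMz2, add_comm]
  have hRzE' : Rz * E' = -E' := by
    rw [hE', mul_smul_comm, mul_sub, mul_one, RMz2, ← smul_neg, neg_sub]
  have hgE : ∀ g : G, RM g * E = E * RM g := by
    intro g
    rw [hE, mul_smul_comm, smul_mul_assoc, mul_add, mul_one, add_mul, one_mul, RzRM]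
  have hgE' : ∀ g : G, RM g * E' = E' * RM g := by
    intro g
    rw [hE', mul_smul_comm, smul_mul_assoc, mul_sub, mul_one, sub_mul, one_mul, RzRM]
  set F : Finset G := Finset.univ.filter (· ∈ S) with hF
  have hAF : A = ∑ s ∈ F, RM s := cayley_eq_sum S
  have hSF : ∀ s ∈ F, s ∈ S := fun s hs => (Finset.mem_filter.1 hs).2
  have habs : ∀ u w : G, (RM u * E) * (RM w * E) = RM (u * w) * E := by
    intro u w
    rw [mul_assoc, ← mul_assoc E, ← hgE, mul_assoc, hEE, ← mul_assoc, RM_mul]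
  have habs' : ∀ u w : G, (RM u * E') * (RM w * E') = RM (u * w) * E' := by
    intro u w
    rw [mul_assoc, ← mul_assoc E', ← hgE', mul_assoc, hE'E', ← mul_assoc, RM_mul]
  -- X part
  set lX : List (Matrix G G ℝ) := F.toList.map (fun s => RM s * E) with hlX
  have hlXmem : ∀ P ∈ lX, ∃ s, s ∈ F ∧ P = RM s * E := by
    intro P hP
    obtain ⟨s, hs, rfl⟩ := List.mem_map.1 hP
    exact ⟨s, Finset.mem_toList.1 hs, rfl⟩
  have hlXsum : lX.sum = A * E := by
    rw [hlX, Finset.sum_map_toList, hAF, Finset.sum_mul]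
  have hlXlen : lX.length ≤ N := by
    rw [hlX, List.length_map, Finset.length_toList]
    exact Finset.card_le_univ F
  have coreX : gpl (A * E) E (IccL N N) * E = 0 := by
    rw [← hlXsum]
    refine core E hEE lX ?_ ?_ ?_ ?_ N N hlXlen hlXlen
    · intro P hP
      obtain ⟨s, _, rfl⟩ := hlXmem P hP
      rw [mul_assoc, hEE]
    · intro P hP
      obtain ⟨s, _, rfl⟩ := hlXmem P hP
      rw [← mul_assoc, ← hgE, mul_assoc, hEE]
    · intro P hP
      obtain ⟨s, _, rfl⟩ := hlXmem P hP
      rw [habs]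
      rcases hsq s with h | h
      · rw [h, RM_one, one_mul]
      · rw [h, ← hRz, hRzE]
    · intro P hP Q hQ
      obtain ⟨s, _, rfl⟩ := hlXmem P hP
      obtain ⟨t, _, rfl⟩ := hlXmem Q hQ
      have e1 : RM s * E * (RM t * E) = RM (s * t) * E := habs s t
      have e2 : RM t * E * (RM s * E) = RM (t * s) * E := habs t s
      rw [e1, e2]
      rcases hcm s t with h | h
      · rw [h]
      · rw [h]
        symm
        calc RM (s * t * z) * E = (RM (s * t) * RM z) * E := by rw [RM_mul]
          _ = RM (s * t) * (RM z * E) := by rw [mul_assoc]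
          _ = RM (s * t) * E := by rw [← hRz, hRzE]
  -- Y part
  set F2 : Finset G := F.filter (fun s => s * s = 1) with hF2
  set F4 : Finset G := F.filter (fun s => ¬ s * s = 1) with hF4
  have h4 : ∀ s ∈ F4, s * s = z ∧ s ∈ S := by
    intro s hs
    rw [hF4, Finset.mem_filter] at hs
    rcases hsq s with h | h
    · exact absurd h hs.2
    · exact ⟨h, hSF s hs.1⟩
  have hmap4 : ∀ s ∈ F4, s * z ∈ F4 := by
    intro s hs
    obtain ⟨hsz, hsS⟩ := h4 s hs
    have hne1 : ¬ s * s = 1 := (Finset.mem_filter.1 hs).2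
    have hinv : s * z = s⁻¹ := by
      have h1 : s * (s * z) = 1 := by rw [← mul_assoc, hsz, hz2]
      exact (eq_inv_of_mul_eq_one_right h1).symm ▸ rfl
    have hsq4 : (s * z) * (s * z) = z := by
      calc (s * z) * (s * z) = s * (z * s) * z := by group
        _ = s * (s * z) * z := by rw [hzc s]
        _ = (s * s) * (z * z) := by group
        _ = z := by rw [hsz, hz2, mul_one]
    rw [hF4, Finset.mem_filter, hF, Finset.mem_filter]
    refine ⟨⟨Finset.mem_univ _, ?_⟩, ?_⟩
    · rw [hinv]; exact hS s hsS
    · rw [hsq4]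
      intro hz1
      exact hne1 (by rw [hsz, hz1])
  have hinvol : ∀ s : G, s * z * z = s := fun s => by rw [mul_assoc, hz2, mul_one]
  have hneg : ∀ s : G, RM (s * z) * E' = -(RM s * E') := by
    intro s
    calc RM (s * z) * E' = (RM s * RM z) * E' := by rw [RM_mul]
      _ = RM s * (RM z * E') := by rw [mul_assoc]
      _ = RM s * (-E') := by rw [← hRz, hRzE']
      _ = -(RM s * E') := by rw [mul_neg]
  have hvanish : ∑ s ∈ F4, RM s * E' = 0 := by
    have hre : ∑ s ∈ F4, RM s * E' = ∑ s ∈ F4, RM (s * z) * E' :=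
      Finset.sum_nbij' (fun s => s * z) (fun s => s * z) hmap4 hmap4
        (fun a _ => hinvol a) (fun a _ => hinvol a)
        (fun a _ => by rw [hinvol a])
    have hT : (∑ s ∈ F4, RM s * E') + (∑ s ∈ F4, RM s * E') = 0 := by
      nth_rewrite 1 [hre]
      rw [← Finset.sum_add_distrib]
      refine Finset.sum_eq_zero ?_
      intro s _
      rw [hneg s, neg_add_cancel]
    have h2T : (2:ℝ) • (∑ s ∈ F4, RM s * E') = 0 := by
      rw [two_smul, hT]
    rcases smul_eq_zero.1 h2T with h | h
    · norm_num at h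
    · exact h
  have hAE' : A * E' = ∑ s ∈ F2, RM s * E' := by
    rw [hAF, Finset.sum_mul, ← Finset.sum_filter_add_sum_filter_not F (fun s => s * s = 1)
      (fun s => RM s * E'), ← hF2, ← hF4, hvanish, add_zero]
  set lY : List (Matrix G G ℝ) := F2.toList.map (fun s => RM s * E') with hlY
  have hlYmem : ∀ P ∈ lY, ∃ s, (s ∈ S ∧ s * s = 1) ∧ P = RM s * E' := by
    intro P hP
    obtain ⟨s, hs, rfl⟩ := List.mem_map.1 hP
    have := Finset.mem_toList.1 hs
    rw [hF2, Finset.mem_filter] at this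
    exact ⟨s, ⟨hSF s this.1, this.2⟩, rfl⟩
  have hlYsum : lY.sum = A * E' := by
    rw [hlY, Finset.sum_map_toList, hAE']
  have hlYlen : lY.length ≤ N := by
    rw [hlY, List.length_map, Finset.length_toList]
    exact Finset.card_le_univ F2
  have coreY : gpl (A * E') E' (IccL N N) * E' = 0 := by
    rw [← hlYsum]
    refine core E' hE'E' lY ?_ ?_ ?_ ?_ N N hlYlen hlYlen
    · intro P hP
      obtain ⟨s, _, rfl⟩ := hlYmem P hP
      rw [mul_assoc, hE'E']
    · intro P hP
      obtain ⟨s, _, rfl⟩ := hlYmem P hP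
      rw [← mul_assoc, ← hgE', mul_assoc, hE'E']
    · intro P hP
      obtain ⟨s, hs, rfl⟩ := hlYmem P hP
      rw [habs', hs.2, RM_one, one_mul]
    · intro P hP Q hQ
      obtain ⟨s, hs, rfl⟩ := hlYmem P hP
      obtain ⟨t, _, rfl⟩ := hlYmem Q hQ
      rw [habs', habs', hc2 s hs.2 t]
  -- assembly
  have cEA : E * A = A * E := by
    rw [hAF, Finset.sum_mul, Finset.mul_sum]
    exact Finset.sum_congr rfl (fun s _ => (hgE s).symm)
  have cE'A : E' * A = A * E' := by
    rw [hAF, Finset.sum_mul, Finset.mul_sum]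
    exact Finset.sum_congr rfl (fun s _ => (hgE' s).symm)
  have pullE : gpl A 1 (IccL N N) * E = gpl (A * E) E (IccL N N) * E := by
    refine pull _ _ E (IccL N N) ?_ ?_
    · intro k _
      have l1 : (A - k • (1:Matrix G G ℝ)) * E = A * E - k • E := by
        rw [sub_mul, smul_mul_assoc, one_mul]
      have l2 : (A * E - k • E) * E = A * E - k • E := by
        rw [sub_mul, smul_mul_assoc, hEE, mul_assoc, hEE]
      rw [l1, l2]
    · intro k _
      refine Commute.sub_right ?_ ?_
      · exact (show E * (A * E) = (A * E) * E by rw [← mul_assoc, cEA])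
      · rw [zsmul_eq_mul]
        exact (Int.cast_commute k E).symm.mul_right (Commute.refl E)
  have pullE' : gpl A 1 (IccL N N) * E' = gpl (A * E') E' (IccL N N) * E' := by
    refine pull _ _ E' (IccL N N) ?_ ?_
    · intro k _
      have l1 : (A - k • (1:Matrix G G ℝ)) * E' = A * E' - k • E' := by
        rw [sub_mul, smul_mul_assoc, one_mul]
      have l2 : (A * E' - k • E') * E' = A * E' - k • E' := by
        rw [sub_mul, smul_mul_assoc, hE'E', mul_assoc, hE'E']
      rw [l1, l2]
    · intro k _
      refine Commute.sub_right ?_ ?_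
      · exact (show E' * (A * E') = (A * E') * E' by rw [← mul_assoc, cE'A])
      · rw [zsmul_eq_mul]
        exact (Int.cast_commute k E').symm.mul_right (Commute.refl E')
  calc gpl A 1 (IccL N N) = gpl A 1 (IccL N N) * 1 := (mul_one _).symm
    _ = gpl A 1 (IccL N N) * E + gpl A 1 (IccL N N) * E' := by rw [← hEE', mul_add]
    _ = 0 := by rw [pullE, pullE', coreX, coreY, add_zero]
end Grp
section Eig
variable {G : Type*} [Fintype G] [DecidableEq G]

lemma eig_int (A : Matrix G G ℝ) (L : List ℤ) (h0 : gpl A 1 L = 0) (μ : ℝ)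
    (hμ : Module.End.HasEigenvalue (Matrix.toLin' A) μ) : ∃ k : ℤ, μ = (k : ℝ) := by
  obtain ⟨v, hv⟩ := hμ.exists_hasEigenvector
  have hv1 : Matrix.toLin' A v = μ • v := hv.apply_eq_smul
  have key : ∀ L' : List ℤ,
      Matrix.toLin' (gpl A 1 L') v = ((L'.map fun (k:ℤ) => μ - (k:ℝ)).prod) • v := by
    intro L'
    induction L' with
    | nil =>
      simp [gpl, Matrix.toLin'_one]
    | cons k L' ih =>
      have hdef : gpl A 1 (k :: L') = (A - (k:ℝ) • 1) * gpl A 1 L' := by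
        rw [gpl, List.map_cons, List.prod_cons, Int.cast_smul_eq_zsmul]
        rfl
      rw [hdef, Matrix.toLin'_mul, LinearMap.comp_apply, ih, map_smul, map_sub,
        map_smul, Matrix.toLin'_one, LinearMap.sub_apply, LinearMap.smul_apply,
        LinearMap.id_apply, hv1, List.map_cons, List.prod_cons, smul_sub,
        smul_smul, smul_smul, ← sub_smul]
      congr 1
      ring
  have hz := key L
  rw [h0, map_zero, LinearMap.zero_apply] at hz
  have hprod : ((L.map fun (k:ℤ) => μ - (k:ℝ)).prod) = 0 := by
    rcases smul_eq_zero.1 hz.symm with h | h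
    · exact h
    · exact absurd h hv.2
  obtain ⟨k, hkL, hk0⟩ := List.mem_map.1 (List.prod_eq_zero_iff.1 hprod)
  exact ⟨k, by linarith [hk0]⟩
end Eig

section Facts
variable (d : ℕ)

abbrev Gd := QuaternionGroup 2 × Multiplicative (Fin d → ZMod 2)

def zd : Gd d := (QuaternionGroup.a 2, 1)

lemma fact_mul2 : ∀ v : Multiplicative (Fin d → ZMod 2), v * v = 1 := by
  intro v
  have h0 : v.toAdd + v.toAdd = 0 := by
    funext i
    exact CharTwo.add_self_eq_zero _
  calc v * v = Multiplicative.ofAdd (v.toAdd + v.toAdd) := rfl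
    _ = Multiplicative.ofAdd 0 := by rw [h0]
    _ = 1 := rfl

lemma fact_z2 : zd d * zd d = 1 := by
  rw [show zd d * zd d = ((QuaternionGroup.a 2 : QuaternionGroup 2) * QuaternionGroup.a 2,
      (1 : Multiplicative (Fin d → ZMod 2)) * 1) from rfl,
    (by decide : (QuaternionGroup.a 2 : QuaternionGroup 2) * QuaternionGroup.a 2 = 1), one_mul]
  rfl

lemma fact_zc : ∀ g : Gd d, zd d * g = g * zd d := by
  rintro ⟨q, v⟩
  rw [show zd d * (q, v) = (QuaternionGroup.a 2 * q, 1 * v) from rfl,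
    show ((q, v) : Gd d) * zd d = (q * QuaternionGroup.a 2, v * 1) from rfl,
    (by decide : ∀ q : QuaternionGroup 2, QuaternionGroup.a 2 * q = q * QuaternionGroup.a 2) q,
    one_mul, mul_one]

lemma fact_sq : ∀ g : Gd d, g * g = 1 ∨ g * g = zd d := by
  rintro ⟨q, v⟩
  rcases (by decide : ∀ q : QuaternionGroup 2, q * q = 1 ∨ q * q = QuaternionGroup.a 2) q with h | h
  · left
    rw [show ((q, v) : Gd d) * (q, v) = (q * q, v * v) from rfl, h, fact_mul2]
    rfl
  · right
    rw [show ((q, v) : Gd d) * (q, v) = (q * q, v * v) from rfl, h, fact_mul2]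
    rfl

lemma fact_cm : ∀ g h : Gd d, h * g = g * h ∨ h * g = g * h * zd d := by
  rintro ⟨q, v⟩ ⟨r, w⟩
  rcases (by decide : ∀ q r : QuaternionGroup 2,
      r * q = q * r ∨ r * q = q * r * QuaternionGroup.a 2) q r with h | h
  · left
    rw [show ((r, w) : Gd d) * (q, v) = (r * q, w * v) from rfl,
      show ((q, v) : Gd d) * (r, w) = (q * r, v * w) from rfl, h, mul_comm w v]
  · right
    rw [show ((r, w) : Gd d) * (q, v) = (r * q, w * v) from rfl,
      show ((q, v) : Gd d) * (r, w) * zd d = (q * r * QuaternionGroup.a 2, v * w * 1) from rfl,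
      h, mul_comm w v, mul_one]

lemma fact_c2 : ∀ g : Gd d, g * g = 1 → ∀ h : Gd d, g * h = h * g := by
  rintro ⟨q, v⟩ hg ⟨r, w⟩
  have hq : q * q = 1 := congrArg Prod.fst hg
  rw [show ((q, v) : Gd d) * (r, w) = (q * r, v * w) from rfl,
    show ((r, w) : Gd d) * (q, v) = (r * q, w * v) from rfl,
    (by decide : ∀ q r : QuaternionGroup 2, q * q = 1 → q * r = r * q) q r hq,
    mul_comm v w]
end Facts

theorem quaternion_times_elementary_abelian_cayley_integral (d : ℕ) :
    ∀ S : Set (QuaternionGroup 2 × Multiplicative (Fin d → ZMod 2)),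
      (∀ s ∈ S, s⁻¹ ∈ S) →
      (1 : QuaternionGroup 2 × Multiplicative (Fin d → ZMod 2)) ∉ S →
      isIntegralMatrix (cayleyMatrix S) := by
  intro S hS _hid
  intro μ hμ
  exact @eig_int _ (Fintype.ofFinite _) (Classical.decEq _) (cayleyMatrix S) _
    (@cayley_annihilated _ _ (Fintype.ofFinite _) (Classical.decEq _) (zd d) (fact_z2 d)
      (fact_zc d) (fact_sq d) (fact_cm d) (fact_c2 d) S hS)
    μ hμ
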